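/- Let \(\sigma_1 \ge 0\), \(\sigma_3 > 0\) with \(\frac{1}{2} < \sigma_1+\sigma_3 \le 1\), and \(\sigma_2 > 1\). Then for \(T \ge 2\), \(\sum_{2 \le m_1 \le T} \sum_{n_1 < m_1} \frac{\log(m_1+n_1)}{m_1^{\sigma_1} n_1^{\sigma_2} (m_1+n_1)^{\sigma_1+2\sigma_3-1}} \ll T^{2-2\sigma_1-2\sigma_3} \log T\) when \(\sigma_1+\sigma_3 < 1\), and \(\ll (\log T)^2\) when \(\sigma_1+\sigma_3 = 1\), with implicit constants depending only on the \(\sigma_j\). -/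

import Mathlib

open Finset MeasureTheory intervalIntegral Real

private lemma integrable_rpow_neg (a : ℝ) {c d : ℝ} (hc : 0 < c) (hcd : c ≤ d) :
    IntervalIntegrable (fun x : ℝ => x ^ (-a)) volume c d := by
  apply ContinuousOn.intervalIntegrable
  apply ContinuousOn.rpow_const continuousOn_id
  intro x hx
  rw [Set.uIcc_of_le hcd] at hx
  exact Or.inl (ne_of_gt (lt_of_lt_of_le hc hx.1))

private lemma sum_rpow_le_integral (a : ℝ) (ha : 0 ≤ a) (N : ℕ) (hN : 1 ≤ N) :
    ∑ m ∈ Finset.Icc 2 N, (m : ℝ) ^ (-a) ≤ ∫ x in (1:ℝ)..(N:ℝ), x ^ (-a) := by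
  induction N with
  | zero => omega
  | succ n ih =>
    rcases Nat.lt_or_ge n 1 with h | h
    · interval_cases n
      simp
    · have hn1 : (1:ℝ) ≤ n := by exact_mod_cast h
      have hsum := ih h
      rw [Finset.sum_Icc_succ_top (by omega : 2 ≤ n + 1)]
      have hsplit : (∫ x in (1:ℝ)..((n:ℝ)+1), x ^ (-a))
          = (∫ x in (1:ℝ)..(n:ℝ), x ^ (-a)) + ∫ x in (n:ℝ)..((n:ℝ)+1), x ^ (-a) :=
        (intervalIntegral.integral_add_adjacent_intervals
          (integrable_rpow_neg a one_pos hn1)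
          (integrable_rpow_neg a (by linarith) (by linarith))).symm
      have hlast : ((n+1 : ℕ) : ℝ) ^ (-a) ≤ ∫ x in (n:ℝ)..((n:ℝ)+1), x ^ (-a) := by
        have hmono : ∀ x ∈ Set.Icc (n:ℝ) ((n:ℝ)+1),
            ((n:ℝ)+1) ^ (-a) ≤ x ^ (-a) := fun x hx =>
          Real.rpow_le_rpow_of_nonpos (by linarith [hx.1]) hx.2 (neg_nonpos.mpr ha)
        have := intervalIntegral.integral_mono_on (by linarith : (n:ℝ) ≤ (n:ℝ)+1)
          (intervalIntegrable_const)
          (integrable_rpow_neg a (by linarith) (by linarith)) hmono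
        rw [intervalIntegral.integral_const] at this
        push_cast
        simpa using this
      push_cast
      push_cast at hsum hlast
      linarith [hsplit, hsum, hlast]

theorem log_weighted_double_sum_bound (σ₁ σ₂ σ₃ : ℝ) (h1 : 0 ≤ σ₁) (h3 : 0 < σ₃)
    (h13 : 1 / 2 < σ₁ + σ₃) (h13' : σ₁ + σ₃ ≤ 1) (h2 : 1 < σ₂) :
    (σ₁ + σ₃ < 1 → ∃ C > 0, ∀ T : ℝ, 2 ≤ T →
      (∑ m₁ ∈ Finset.Icc 2 ⌊T⌋₊, ∑ n₁ ∈ Finset.Ico 1 m₁,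
        Real.log ((m₁ + n₁ : ℕ) : ℝ) /
          ((m₁ : ℝ) ^ σ₁ * (n₁ : ℝ) ^ σ₂ * ((m₁ + n₁ : ℕ) : ℝ) ^ (σ₁ + 2 * σ₃ - 1)))
        ≤ C * T ^ (2 - 2 * σ₁ - 2 * σ₃) * Real.log T) ∧
    (σ₁ + σ₃ = 1 → ∃ C > 0, ∀ T : ℝ, 2 ≤ T →
      (∑ m₁ ∈ Finset.Icc 2 ⌊T⌋₊, ∑ n₁ ∈ Finset.Ico 1 m₁,
        Real.log ((m₁ + n₁ : ℕ) : ℝ) /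
          ((m₁ : ℝ) ^ σ₁ * (n₁ : ℝ) ^ σ₂ * ((m₁ + n₁ : ℕ) : ℝ) ^ (σ₁ + 2 * σ₃ - 1)))
        ≤ C * Real.log T ^ 2) := by
  -- abbreviations
  set a : ℝ := 2 * σ₁ + 2 * σ₃ - 1 with ha_def
  have ha_pos : 0 < a := by simp only [ha_def]; linarith
  -- the zeta constant
  have hsummable : Summable (fun n : ℕ => 1 / (n:ℝ) ^ σ₂) :=
    (Real.summable_one_div_nat_rpow).mpr h2
  set Z : ℝ := ∑' n : ℕ, 1 / (n:ℝ) ^ σ₂ with hZ_def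
  have hZ1 : (1:ℝ) ≤ Z := by
    have h := Summable.le_tsum hsummable 1 (fun n _ => by positivity)
    rw [Nat.cast_one, Real.one_rpow, div_one] at h
    exact h
  have hZpos : 0 < Z := lt_of_lt_of_le one_pos hZ1
  -- the pointwise bound on each term
  have hterm : ∀ m n : ℕ, 2 ≤ m → 1 ≤ n → n < m →
      Real.log ((m + n : ℕ) : ℝ) /
          ((m : ℝ) ^ σ₁ * (n : ℝ) ^ σ₂ * ((m + n : ℕ) : ℝ) ^ (σ₁ + 2 * σ₃ - 1))
        ≤ 4 * Real.log m * ((m:ℝ) ^ (-a) * (n:ℝ) ^ (-σ₂)) := by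
    intro m n hm hn hnm
    have hmpos : (0:ℝ) < m := by positivity
    have hnpos : (0:ℝ) < n := by exact_mod_cast hn
    have hmn : (0:ℝ) < ((m+n:ℕ):ℝ) := by push_cast; linarith
    have h2m : ((m+n:ℕ):ℝ) ≤ 2 * m := by
      push_cast
      have : (n:ℝ) ≤ m := by exact_mod_cast hnm.le
      linarith
    have hm_le : (m:ℝ) ≤ ((m+n:ℕ):ℝ) := by push_cast; linarith
    have hm2 : (2:ℝ) ≤ m := by exact_mod_cast hm
    set e : ℝ := σ₁ + 2 * σ₃ - 1 with he_def
    have he_lb : -1 ≤ e := by simp only [he_def]; linarith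
    -- numerator bound
    have hlogm : 0 ≤ Real.log m := Real.log_nonneg (by linarith)
    have hnum : Real.log ((m+n:ℕ):ℝ) ≤ 2 * Real.log m := by
      have := Real.log_le_log hmn h2m
      rw [Real.log_mul (by norm_num) (ne_of_gt hmpos)] at this
      have h2lem : Real.log 2 ≤ Real.log m := Real.log_le_log (by norm_num) hm2
      linarith
    -- denominator bound
    have hden : (1/2) * (m:ℝ) ^ e ≤ ((m+n:ℕ):ℝ) ^ e := by
      rcases le_or_gt 0 e with he | he
      · have h1' : (m:ℝ) ^ e ≤ ((m+n:ℕ):ℝ) ^ e := Real.rpow_le_rpow hmpos.le hm_le he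
        nlinarith [Real.rpow_nonneg hmpos.le e]
      · have h1' : ((2:ℝ) * m) ^ e ≤ ((m+n:ℕ):ℝ) ^ e :=
          Real.rpow_le_rpow_of_nonpos hmn h2m he.le
        have h2' : ((2:ℝ) * m) ^ e = (2:ℝ) ^ e * (m:ℝ) ^ e :=
          Real.mul_rpow (by norm_num) hmpos.le
        have h3' : (1/2 : ℝ) ≤ (2:ℝ) ^ e := by
          have := Real.rpow_le_rpow_of_exponent_le (by norm_num : (1:ℝ) ≤ 2) he_lb
          rw [Real.rpow_neg_one] at this
          linarith
        have h4' : (0:ℝ) ≤ (m:ℝ) ^ e := Real.rpow_nonneg hmpos.le e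
        nlinarith
    have hDen : (1/2) * (m:ℝ) ^ a * (n:ℝ) ^ σ₂
        ≤ (m : ℝ) ^ σ₁ * (n : ℝ) ^ σ₂ * ((m + n : ℕ) : ℝ) ^ e := by
      have hsplit : (m:ℝ) ^ a = (m:ℝ) ^ σ₁ * (m:ℝ) ^ e := by
        rw [← Real.rpow_add hmpos, ha_def, he_def]; ring_nf
      have hn2 : (0:ℝ) ≤ (n:ℝ) ^ σ₂ := Real.rpow_nonneg hnpos.le σ₂
      have hmσ : (0:ℝ) ≤ (m:ℝ) ^ σ₁ := Real.rpow_nonneg hmpos.le σ₁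
      calc (1/2) * (m:ℝ) ^ a * (n:ℝ) ^ σ₂
          = ((1/2) * (m:ℝ) ^ e) * ((m:ℝ) ^ σ₁ * (n:ℝ) ^ σ₂) := by rw [hsplit]; ring
        _ ≤ ((m+n:ℕ):ℝ) ^ e * ((m:ℝ) ^ σ₁ * (n:ℝ) ^ σ₂) := by
            apply mul_le_mul_of_nonneg_right hden (by positivity)
        _ = (m : ℝ) ^ σ₁ * (n : ℝ) ^ σ₂ * ((m + n : ℕ) : ℝ) ^ e := by ring
    have hDpos : (0:ℝ) < (1/2) * (m:ℝ) ^ a * (n:ℝ) ^ σ₂ := by positivity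
    have := div_le_div₀ (by linarith : (0:ℝ) ≤ 2 * Real.log m) hnum hDpos hDen
    refine this.trans (le_of_eq ?_)
    rw [Real.rpow_neg hmpos.le, Real.rpow_neg hnpos.le]
    have h5 : (m:ℝ) ^ a ≠ 0 := by positivity
    have h6 : (n:ℝ) ^ σ₂ ≠ 0 := by positivity
    field_simp
    ring
  -- the main estimate for all T
  have hmain : ∀ T : ℝ, 2 ≤ T →
      (∑ m₁ ∈ Finset.Icc 2 ⌊T⌋₊, ∑ n₁ ∈ Finset.Ico 1 m₁,
        Real.log ((m₁ + n₁ : ℕ) : ℝ) /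
          ((m₁ : ℝ) ^ σ₁ * (n₁ : ℝ) ^ σ₂ * ((m₁ + n₁ : ℕ) : ℝ) ^ (σ₁ + 2 * σ₃ - 1)))
        ≤ 4 * Z * Real.log T * ∑ m ∈ Finset.Icc 2 ⌊T⌋₊, (m:ℝ) ^ (-a) := by
    intro T hT
    have hlogT : 0 ≤ Real.log T := Real.log_nonneg (by linarith)
    rw [Finset.mul_sum]
    apply Finset.sum_le_sum
    intro m hmmem
    obtain ⟨hm2, hmN⟩ := Finset.mem_Icc.mp hmmem
    have hmT : (m:ℝ) ≤ T := le_trans (Nat.cast_le.mpr hmN) (Nat.floor_le (by linarith))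
    have hlogmT : Real.log m ≤ Real.log T :=
      Real.log_le_log (by positivity) hmT
    have hlogm : 0 ≤ Real.log m := Real.log_nonneg (by exact_mod_cast Nat.one_le_iff_ne_zero.mpr (by omega))
    calc ∑ n₁ ∈ Finset.Ico 1 m, Real.log ((m + n₁ : ℕ) : ℝ) /
          ((m : ℝ) ^ σ₁ * (n₁ : ℝ) ^ σ₂ * ((m + n₁ : ℕ) : ℝ) ^ (σ₁ + 2 * σ₃ - 1))
        ≤ ∑ n₁ ∈ Finset.Ico 1 m, 4 * Real.log m * ((m:ℝ) ^ (-a) * (n₁:ℝ) ^ (-σ₂)) := by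
          apply Finset.sum_le_sum
          intro n hnmem
          obtain ⟨hn1, hnm⟩ := Finset.mem_Ico.mp hnmem
          exact hterm m n hm2 hn1 hnm
      _ = 4 * Real.log m * (m:ℝ) ^ (-a) * ∑ n₁ ∈ Finset.Ico 1 m, (n₁:ℝ) ^ (-σ₂) := by
          rw [Finset.mul_sum]; apply Finset.sum_congr rfl; intros; ring
      _ ≤ 4 * Real.log m * (m:ℝ) ^ (-a) * Z := by
          apply mul_le_mul_of_nonneg_left _
            (mul_nonneg (mul_nonneg (by linarith) hlogm) (Real.rpow_nonneg (by positivity) _))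
          have : ∑ n₁ ∈ Finset.Ico 1 m, (n₁:ℝ) ^ (-σ₂)
              = ∑ n₁ ∈ Finset.Ico 1 m, 1 / (n₁:ℝ) ^ σ₂ := by
            apply Finset.sum_congr rfl
            intro n hnmem
            obtain ⟨hn1, _⟩ := Finset.mem_Ico.mp hnmem
            rw [Real.rpow_neg (by positivity), one_div]
          rw [this]
          exact Summable.sum_le_tsum _ (fun n _ => by positivity) hsummable
      _ ≤ 4 * Z * Real.log T * (m:ℝ) ^ (-a) := by
          have hma : (0:ℝ) ≤ (m:ℝ) ^ (-a) := Real.rpow_nonneg (Nat.cast_nonneg m) _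
          nlinarith [mul_le_mul_of_nonneg_left hlogmT (le_of_lt hZpos)]
  constructor
  · -- case σ₁ + σ₃ < 1
    intro hlt
    have ha1 : a < 1 := by simp only [ha_def]; linarith
    refine ⟨4 * Z / (1 - a), div_pos (by linarith) (by linarith), fun T hT => ?_⟩
    have hN2 : 2 ≤ ⌊T⌋₊ := Nat.le_floor (by exact_mod_cast hT)
    have hN1R : (1:ℝ) ≤ (⌊T⌋₊:ℝ) := by exact_mod_cast (by omega : 1 ≤ ⌊T⌋₊)
    have hlogT : 0 ≤ Real.log T := Real.log_nonneg (by linarith)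
    have hint : (∫ x in (1:ℝ)..(⌊T⌋₊:ℝ), x ^ (-a))
        = ((⌊T⌋₊:ℝ) ^ (1 - a) - 1) / (1 - a) := by
      rw [integral_rpow (Or.inl (by linarith)), show -a + 1 = 1 - a by ring, Real.one_rpow]
    have hsum_le : ∑ m ∈ Finset.Icc 2 ⌊T⌋₊, (m:ℝ) ^ (-a)
        ≤ T ^ (1 - a) / (1 - a) := by
      refine (sum_rpow_le_integral a ha_pos.le ⌊T⌋₊ (by omega)).trans ?_
      rw [hint]
      have hTa : (⌊T⌋₊:ℝ) ^ (1 - a) ≤ T ^ (1 - a) :=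
        Real.rpow_le_rpow (by linarith) (Nat.floor_le (by linarith)) (by linarith)
      have hTa0 : (0:ℝ) ≤ T ^ (1-a) := Real.rpow_nonneg (by linarith) _
      apply div_le_div₀ hTa0 (by linarith) (by linarith) le_rfl
    have := (hmain T hT).trans
      (mul_le_mul_of_nonneg_left hsum_le (by positivity))
    have heq : 2 - 2 * σ₁ - 2 * σ₃ = 1 - a := by simp only [ha_def]; ring
    rw [heq]
    calc _ ≤ 4 * Z * Real.log T * (T ^ (1 - a) / (1 - a)) := this
      _ = 4 * Z / (1 - a) * T ^ (1 - a) * Real.log T := by ring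
  · -- case σ₁ + σ₃ = 1
    intro heq1
    have ha1 : a = 1 := by simp only [ha_def]; linarith
    refine ⟨4 * Z, by positivity, fun T hT => ?_⟩
    have hN2 : 2 ≤ ⌊T⌋₊ := Nat.le_floor (by exact_mod_cast hT)
    have hN1R : (1:ℝ) ≤ (⌊T⌋₊:ℝ) := by exact_mod_cast (by omega : 1 ≤ ⌊T⌋₊)
    have hlogT : 0 ≤ Real.log T := Real.log_nonneg (by linarith)
    have hint : (∫ x in (1:ℝ)..(⌊T⌋₊:ℝ), x ^ (-a)) = Real.log (⌊T⌋₊:ℝ) := by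
      rw [ha1]
      have : (∫ x in (1:ℝ)..(⌊T⌋₊:ℝ), x ^ (-1:ℝ))
          = ∫ x in (1:ℝ)..(⌊T⌋₊:ℝ), 1 / x := by
        apply intervalIntegral.integral_congr
        intro x hx
        rw [Set.uIcc_of_le hN1R] at hx
        simp [Real.rpow_neg_one]
      rw [this, integral_one_div]
      · rw [div_one]
      · rw [Set.uIcc_of_le hN1R]
        intro hmem
        linarith [hmem.1]
    have hsum_le : ∑ m ∈ Finset.Icc 2 ⌊T⌋₊, (m:ℝ) ^ (-a) ≤ Real.log T := by
      refine (sum_rpow_le_integral a ha_pos.le ⌊T⌋₊ (by omega)).trans ?_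
      rw [hint]
      exact Real.log_le_log (by linarith) (Nat.floor_le (by linarith))
    have := (hmain T hT).trans
      (mul_le_mul_of_nonneg_left hsum_le (by positivity))
    calc _ ≤ 4 * Z * Real.log T * Real.log T := this
      _ = 4 * Z * Real.log T ^ 2 := by ring
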